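/- arXiv:2509.03390 — 2 statements merged into one kernel-verified Lean document; each statement's English description precedes it below -/
import Mathlib

section
/- The map sending an odd-row RIT-move λ → λ̄ to the Nim position rem(λ̄) is a bijection between the set of positions reachable from λ by an RIT-move on an odd-numbered row and the set of positions reachable from rem(λ) by a single Nim move. -/
/-- The `j`-th part (0-indexed) of a partition given as a list, `0` beyond the end. -/
def part (l : List ℕ) (j : ℕ) : ℕ := l.getD j 0

/-- A partition: a nonincreasing list of positive integers. -/
def IsPartition (l : List ℕ) : Prop :=
  l.Chain' (· ≥ ·) ∧ ∀ x ∈ l, 0 < x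

/-- RIT move: replace the part at (0-indexed) position `i` by a smaller value `v`,
keeping the sequence nonincreasing, then drop the (trailing) zeros. -/
def RitMove (l l' : List ℕ) : Prop :=
  ∃ i v, i < l.length ∧ v < part l i ∧ (l.set i v).Chain' (· ≥ ·) ∧
    l' = (l.set i v).filter (fun x => x ≠ 0)

/-- RIT move on an odd-numbered row (1-indexed), i.e. an even 0-indexed position. -/
def RitMoveOdd (l l' : List ℕ) : Prop :=
  ∃ i v, i < l.length ∧ i % 2 = 0 ∧ v < part l i ∧ (l.set i v).Chain' (· ≥ ·) ∧
    l' = (l.set i v).filter (fun x => x ≠ 0)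

/-- RIT move on an even-numbered row (1-indexed), i.e. an odd 0-indexed position. -/
def RitMoveEven (l l' : List ℕ) : Prop :=
  ∃ i v, i < l.length ∧ i % 2 = 1 ∧ v < part l i ∧ (l.set i v).Chain' (· ≥ ·) ∧
    l' = (l.set i v).filter (fun x => x ≠ 0)

/-- `core λ = (λ₂, λ₂, λ₄, λ₄, …)` (1-indexed parts), as a `0`-padded sequence. -/
def core (l : List ℕ) : ℕ → ℕ := fun j => part l (2 * (j / 2) + 1)

/-- `rem λ = (λ₁ - λ₂, λ₃ - λ₄, …)` (1-indexed parts), as a `0`-padded sequence. -/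
def rem (l : List ℕ) : ℕ → ℕ := fun i => part l (2 * i) - part l (2 * i + 1)

/-- A Nim move strictly decreases exactly one coordinate. -/
def NimMove (p q : ℕ → ℕ) : Prop := ∃ i, q i < p i ∧ ∀ j, j ≠ i → q j = p j

/-- The nim-sum (bitwise XOR) of the remnant of `l`:
`(λ₁ - λ₂) ⊕ (λ₃ - λ₄) ⊕ ⋯ ⊕ (λ_{2⌈r/2⌉-1} - λ_{2⌈r/2⌉})`. -/
def nimSum (l : List ℕ) : ℕ :=
  (List.ofFn (fun i : Fin ((l.length + 1) / 2) => rem l i)).foldr (· ^^^ ·) 0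

/-- The minimal excludant of a set of naturals. -/
noncomputable def mexOf (S : Set ℕ) : ℕ := sInf {n | n ∉ S}

/-- `G` is the (normal play) Sprague-Grundy function of RIT. -/
def IsRitGrundy (G : List ℕ → ℕ) : Prop :=
  ∀ l, IsPartition l → G l = mexOf {n | ∃ l', RitMove l l' ∧ G l' = n}

/-- `G` is the misère Grundy function of RIT (value `1` at the terminal position). -/
def IsRitMisereGrundy (G : List ℕ → ℕ) : Prop :=
  G [] = 1 ∧ ∀ l, IsPartition l → l ≠ [] →
    G l = mexOf {n | ∃ l', RitMove l l' ∧ G l' = n}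

/-- `G` is the misère Grundy function of Nim on `0`-padded sequences of heaps. -/
def IsNimMisereGrundy (G : (ℕ → ℕ) → ℕ) : Prop :=
  (∀ p : ℕ → ℕ, (∀ i, p i = 0) → G p = 1) ∧
  (∀ p : ℕ → ℕ, (Function.support p).Finite → (∃ i, p i ≠ 0) →
    G p = mexOf {n | ∃ q, NimMove p q ∧ G q = n})

/-- `P` is the set of P-positions of RIT under normal play. -/
def IsRitP (P : List ℕ → Prop) : Prop :=
  ∀ l, IsPartition l → (P l ↔ ∀ l', RitMove l l' → ¬ P l')

lemma part_mono {l : List ℕ} (h : l.Chain' (· ≥ ·)) {a b : ℕ} (hab : a ≤ b) :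
    part l b ≤ part l a := by
  by_cases hb : b < l.length
  · have ha : a < l.length := lt_of_le_of_lt hab hb
    rcases eq_or_lt_of_le hab with rfl | hlt
    · exact le_refl _
    · have hp := (List.isChain_iff_pairwise).mp h
      rw [List.pairwise_iff_getElem] at hp
      have := hp a b ha hb hlt
      show l.getD b 0 ≤ l.getD a 0
      rw [List.getD_eq_getElem _ _ ha, List.getD_eq_getElem _ _ hb]
      exact this
  · have : part l b = 0 := List.getD_eq_default _ _ (Nat.le_of_not_lt hb)
    simp [this]

lemma part_set {l : List ℕ} {i : ℕ} (hi : i < l.length) (v j : ℕ) :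
    part (l.set i v) j = if j = i then v else part l j := by
  unfold part
  rw [List.getD_eq_getElem?_getD, List.getElem?_set, List.getD_eq_getElem?_getD]
  by_cases h : j = i
  · simp [h, hi]
  · simp [h, Ne.symm h]

lemma part_append_zero (xs : List ℕ) (j : ℕ) : part (xs ++ [0]) j = part xs j := by
  unfold part
  by_cases hj : j < xs.length
  · rw [List.getD_eq_getElem?_getD, List.getElem?_append_left hj, ← List.getD_eq_getElem?_getD]
  · rw [List.getD_eq_default _ _ (Nat.le_of_not_lt hj)]
    by_cases hj2 : j < xs.length + 1
    · have : j = xs.length := by omega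
      subst this
      rw [List.getD_eq_getElem?_getD, List.getElem?_append_right (le_refl _)]
      simp
    · rw [List.getD_eq_default]
      simp; omega

lemma part_filter {l : List ℕ} (hpos : ∀ x ∈ l, 0 < x) {i v : ℕ} (hi : i < l.length)
    (hc : (l.set i v).Chain' (· ≥ ·)) (j : ℕ) :
    part ((l.set i v).filter (fun x => x ≠ 0)) j = part (l.set i v) j := by
  by_cases hv : v = 0
  case neg =>
    have : (l.set i v).filter (fun x => x ≠ 0) = l.set i v := by
      apply List.filter_eq_self.mpr
      intro a ha
      rcases List.mem_or_eq_of_mem_set ha with h | rfl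
      · simpa using (hpos a h).ne'
      · simpa using hv
    rw [this]
  case pos =>
    subst hv
    have hlen : i + 1 = l.length := by
      by_contra hne
      have h1 : i + 1 < l.length := by omega
      have hm := part_mono hc (show i ≤ i + 1 by omega)
      rw [part_set hi, part_set hi] at hm
      rw [if_neg (show i + 1 ≠ i by omega), if_pos rfl] at hm
      have : part l (i+1) = l[i+1] := List.getD_eq_getElem _ _ h1
      have := hpos l[i+1] (List.getElem_mem h1)
      omega
    have hset : l.set i 0 = l.take i ++ [0] := by
      rw [List.set_eq_take_append_cons_drop, if_pos hi, List.drop_eq_nil_of_le (by omega)]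
    have hfil : (l.take i).filter (fun x => x ≠ 0) = l.take i := by
      apply List.filter_eq_self.mpr
      intro a ha
      simpa using (hpos a (List.mem_of_mem_take ha)).ne'
    rw [hset]
    have h2 : (l.take i ++ [0]).filter (fun x => x ≠ 0) = l.take i := by
      rw [List.filter_append, hfil]; simp
    rw [h2, part_append_zero]

lemma rem_move {l : List ℕ} (hpos : ∀ x ∈ l, 0 < x) {m v : ℕ} (hi : 2*m < l.length)
    (hc : (l.set (2*m) v).Chain' (· ≥ ·)) (j : ℕ) :
    rem ((l.set (2*m) v).filter (fun x => x ≠ 0)) j =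
      if j = m then v - part l (2*m+1) else rem l j := by
  unfold rem
  rw [part_filter hpos hi hc, part_filter hpos hi hc, part_set hi, part_set hi]
  by_cases hj : j = m
  · subst hj
    rw [if_pos rfl, if_pos rfl, if_neg (by omega)]
  · rw [if_neg hj, if_neg (by omega), if_neg (by omega)]

lemma move_bounds {l : List ℕ} {m v : ℕ} (hi : 2*m < l.length)
    (hv : v < part l (2*m)) (hc : (l.set (2*m) v).Chain' (· ≥ ·)) :
    part l (2*m+1) ≤ v ∧ v - part l (2*m+1) < rem l m := by
  have hvl : part l (2*m+1) ≤ v := by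
    by_cases h1 : 2*m+1 < l.length
    · have hm := part_mono hc (show 2*m ≤ 2*m+1 by omega)
      rw [part_set hi, part_set hi, if_neg (by omega), if_pos rfl] at hm
      exact hm
    · rw [show part l (2*m+1) = l.getD (2*m+1) 0 from rfl,
        List.getD_eq_default _ _ (Nat.le_of_not_lt h1)]
      exact Nat.zero_le _
  exact ⟨hvl, Nat.sub_lt_sub_right hvl hv⟩

/-- `rem` is a bijection between odd-row RIT options of `λ`
and Nim options of `rem λ`. -/
theorem stmt_5 (l : List ℕ) (hl : IsPartition l) :
    Set.BijOn rem {l' | RitMoveOdd l l'} {p | NimMove (rem l) p} := by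
  obtain ⟨hch, hpos⟩ := hl
  refine ⟨?_, ?_, ?_⟩
  · rintro l' ⟨i, v, hi, hpar, hv, hc, rfl⟩
    obtain ⟨m, rfl⟩ : ∃ m, i = 2*m := ⟨i/2, by omega⟩
    obtain ⟨hvl, hlt⟩ := move_bounds hi hv hc
    refine ⟨m, ?_, ?_⟩
    · rw [rem_move hpos hi hc, if_pos rfl]; exact hlt
    · intro j hj; rw [rem_move hpos hi hc, if_neg hj]
  · rintro l₁ ⟨i₁, v₁, h1i, h1p, h1v, h1c, rfl⟩ l₂ ⟨i₂, v₂, h2i, h2p, h2v, h2c, rfl⟩ heq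
    obtain ⟨m₁, rfl⟩ : ∃ m, i₁ = 2*m := ⟨i₁/2, by omega⟩
    obtain ⟨m₂, rfl⟩ : ∃ m, i₂ = 2*m := ⟨i₂/2, by omega⟩
    obtain ⟨hv1, hlt1⟩ := move_bounds h1i h1v h1c
    obtain ⟨hv2, hlt2⟩ := move_bounds h2i h2v h2c
    have hm : m₁ = m₂ := by
      by_contra hne
      have h1 := congrFun heq m₁
      rw [rem_move hpos h1i h1c, rem_move hpos h2i h2c, if_pos rfl, if_neg hne] at h1
      omega
    subst hm
    have h1 := congrFun heq m₁
    rw [rem_move hpos h1i h1c, rem_move hpos h2i h2c, if_pos rfl, if_pos rfl] at h1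
    have : v₁ = v₂ := by omega
    subst this
    rfl
  · rintro q ⟨k, hqk, hq⟩
    have hrl : 0 < rem l k := by omega
    have h2k : 2*k < l.length := by
      by_contra h
      have : part l (2*k) = 0 := List.getD_eq_default _ _ (Nat.le_of_not_lt h)
      unfold rem at hrl; omega
    have hck : part l (2*k+1) < part l (2*k) := by
      have := hrl; unfold rem at this; omega
    set c := part l (2*k+1) with hc_def
    set v := q k + c with hv_def
    have hv : v < part l (2*k) := by
      have := hqk; unfold rem at this; omega
    have hcc : (l.set (2*k) v).Chain' (· ≥ ·) := by
      apply List.isChain_iff_pairwise.mpr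
      rw [List.pairwise_iff_getElem]
      intro a b ha hb hab
      simp only [List.length_set] at ha hb
      have ea : (l.set (2*k) v)[a]'(by simpa using ha) = part (l.set (2*k) v) a :=
        (List.getD_eq_getElem _ _ (by simpa using ha)).symm
      have eb : (l.set (2*k) v)[b]'(by simpa using hb) = part (l.set (2*k) v) b :=
        (List.getD_eq_getElem _ _ (by simpa using hb)).symm
      show (l.set (2*k) v)[a]'(by simpa using ha) ≥ (l.set (2*k) v)[b]'(by simpa using hb)
      rw [ea, eb, part_set h2k, part_set h2k]
      by_cases hbk : b = 2*k
      · rw [if_pos hbk, if_neg (by omega)]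
        calc v ≤ part l (2*k) := le_of_lt hv
        _ ≤ part l a := part_mono hch (by omega)
      · rw [if_neg hbk]
        by_cases hak : a = 2*k
        · rw [if_pos hak]
          calc part l b ≤ part l (2*k+1) := part_mono hch (by omega)
          _ ≤ v := by omega
        · rw [if_neg hak]
          exact part_mono hch (le_of_lt hab)
    refine ⟨(l.set (2*k) v).filter (fun x => x ≠ 0),
      ⟨2*k, v, h2k, by omega, hv, hcc, rfl⟩, ?_⟩
    funext j
    rw [rem_move hpos h2k hcc]
    by_cases hj : j = k
    · subst hj; rw [if_pos rfl]; omega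
    · rw [if_neg hj]; exact (hq j hj).symm
end

section
/- If λ is a partition whose remnant has nim-sum 0 (a P-position of RIT) and the opponent makes an RIT-move reducing an even-numbered row 2i by k, then reducing row 2i-1 of the resulting position by k is a valid RIT-move that returns to a position whose remnant is the same, hence again has nim-sum 0. -/
private lemma part_eq_getElem' (l : List ℕ) {j : ℕ} (h : j < l.length) : part l j = l[j] :=
  List.getD_eq_getElem l 0 h

private lemma part_eq_zero' (l : List ℕ) {j : ℕ} (h : l.length ≤ j) : part l j = 0 :=
  List.getD_eq_default l 0 h

private lemma part_set_eq' (l : List ℕ) (v j : ℕ) (h : j < l.length) :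
    part (l.set j v) j = v := by
  rw [part_eq_getElem' _ (by simpa using h), List.getElem_set, if_pos rfl]

private lemma part_set_ne' (l : List ℕ) (v j n : ℕ) (h : n ≠ j) :
    part (l.set j v) n = part l n := by
  rcases lt_or_ge n l.length with h2 | h2
  · rw [part_eq_getElem' _ (by simpa using h2), part_eq_getElem' _ h2, List.getElem_set,
      if_neg (fun hh => h hh.symm)]
  · rw [part_eq_zero' _ (by simpa using h2), part_eq_zero' _ h2]

private lemma part_take' (l : List ℕ) (m n : ℕ) :
    part (l.take m) n = if n < m then part l n else 0 := by
  split_ifs with h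
  · rcases lt_or_ge n l.length with h2 | h2
    · rw [part_eq_getElem' _ (by simp [List.length_take]; omega),
        part_eq_getElem' _ h2, List.getElem_take]
    · rw [part_eq_zero' _ (by simp [List.length_take]; omega), part_eq_zero' _ h2]
  · exact part_eq_zero' _ (by simp [List.length_take]; omega)

private lemma chain'_part_iff (l : List ℕ) :
    l.Chain' (· ≥ ·) ↔ ∀ t, t + 1 < l.length → part l (t + 1) ≤ part l t := by
  unfold List.Chain'
  rw [List.isChain_iff_getElem]
  constructor
  · intro h t ht
    have := h t (by omega)
    rw [part_eq_getElem' _ ht, part_eq_getElem' _ (by omega)]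
    exact this
  · intro h t ht
    have h2 : t + 1 < l.length := by omega
    have := h t h2
    rw [part_eq_getElem' _ h2, part_eq_getElem' _ (by omega)] at this
    simpa using this

private lemma part_anti (l : List ℕ) (h : l.Chain' (· ≥ ·)) {m n : ℕ} (hmn : m ≤ n) :
    part l n ≤ part l m := by
  rcases lt_or_ge n l.length with h2 | h2
  · rcases eq_or_lt_of_le hmn with rfl | hlt
    · exact le_refl _
    · have hp := List.isChain_iff_pairwise.mp h
      have := (List.pairwise_iff_getElem.mp hp) m n (by omega) h2 hlt
      rw [part_eq_getElem' _ h2, part_eq_getElem' _ (by omega)]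
      exact this
  · rw [part_eq_zero' _ h2]; exact Nat.zero_le _

private lemma chain'_set_of (l : List ℕ) (hl : l.Chain' (· ≥ ·)) (j v : ℕ)
    (hj : j < l.length) (hv : v ≤ part l j) (hv2 : part l (j + 1) ≤ v) :
    (l.set j v).Chain' (· ≥ ·) := by
  rw [chain'_part_iff] at hl ⊢
  intro t ht
  rw [List.length_set] at ht
  rcases eq_or_ne t j with rfl | h1
  · rw [part_set_eq' _ _ _ hj, part_set_ne' _ _ _ _ (by omega)]
    exact hv2
  · rcases eq_or_ne (t + 1) j with h2 | h2
    · rw [h2, part_set_eq' _ _ _ hj, part_set_ne' _ _ _ _ h1]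
      calc v ≤ part l j := hv
        _ ≤ part l t := part_anti l (by rw [chain'_part_iff]; exact hl) (by omega)
    · rw [part_set_ne' _ _ _ _ h2, part_set_ne' _ _ _ _ h1]
      exact hl t ht

private lemma foldr_xor_ext (g : ℕ → ℕ) (N : ℕ) (h0 : ∀ j, N ≤ j → g j = 0) :
    ∀ M, N ≤ M →
      (List.ofFn (fun i : Fin M => g i)).foldr (· ^^^ ·) 0
        = (List.ofFn (fun i : Fin N => g i)).foldr (· ^^^ ·) 0 := by
  intro M
  induction M with
  | zero =>
    intro h
    have : N = 0 := by omega
    subst this; rfl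
  | succ M ih =>
    intro hM
    rcases eq_or_lt_of_le hM with rfl | h
    · rfl
    · have hg : g M = 0 := h0 M (by omega)
      rw [List.ofFn_succ', List.concat_eq_append, List.foldr_concat]
      simp only [Fin.val_last, hg, Fin.coe_castSucc, Nat.zero_xor, Nat.xor_zero]
      exact ih (by omega)

private lemma rem_eq_zero (l : List ℕ) {j : ℕ} (h : (l.length + 1) / 2 ≤ j) : rem l j = 0 := by
  have h1 : part l (2 * j) = 0 := part_eq_zero' l (by omega)
  simp [rem, h1]

private lemma nimSum_congr (l' l : List ℕ) (h : rem l' = rem l) : nimSum l' = nimSum l := by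
  have h1 := foldr_xor_ext (rem l') ((l'.length + 1) / 2) (fun j hj => rem_eq_zero l' hj)
      (max ((l'.length + 1) / 2) ((l.length + 1) / 2)) (le_max_left _ _)
  have h2 := foldr_xor_ext (rem l) ((l.length + 1) / 2) (fun j hj => rem_eq_zero l hj)
      (max ((l'.length + 1) / 2) ((l.length + 1) / 2)) (le_max_right _ _)
  unfold nimSum
  rw [← h1, h, h2]

/-- from a position whose remnant has nim-sum `0`, if the opponent
reduces an even-numbered row by `k`, reducing the row above by `k` is a valid RIT
move restoring the remnant, hence its nim-sum is again `0`. -/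
theorem stmt_9 (l : List ℕ) (hl : IsPartition l) (hP : nimSum l = 0)
    (i k : ℕ) (hk : 0 < k) (hi : 2 * i + 1 < l.length)
    (hkle : k ≤ part l (2 * i + 1))
    (hchain : (l.set (2 * i + 1) (part l (2 * i + 1) - k)).Chain' (· ≥ ·)) :
    RitMove ((l.set (2 * i + 1) (part l (2 * i + 1) - k)).filter (fun x => x ≠ 0))
      ((((l.set (2 * i + 1) (part l (2 * i + 1) - k)).filter (fun x => x ≠ 0)).set
          (2 * i) (part l (2 * i) - k)).filter (fun x => x ≠ 0)) ∧
    rem ((((l.set (2 * i + 1) (part l (2 * i + 1) - k)).filter (fun x => x ≠ 0)).set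
          (2 * i) (part l (2 * i) - k)).filter (fun x => x ≠ 0)) = rem l ∧
    nimSum ((((l.set (2 * i + 1) (part l (2 * i + 1) - k)).filter (fun x => x ≠ 0)).set
          (2 * i) (part l (2 * i) - k)).filter (fun x => x ≠ 0)) = 0 := by
  obtain ⟨hchl, hpos⟩ := hl
  have hchl' := (chain'_part_iff l).mp hchl
  have h2i : 2 * i < l.length := by omega
  have hcpos : 0 < part l (2 * i + 1) := by
    rw [part_eq_getElem' _ hi]; exact hpos _ (List.getElem_mem hi)
  have hac : part l (2 * i + 1) ≤ part l (2 * i) := part_anti l hchl (by omega)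
  set c := part l (2 * i + 1) with hc
  set a := part l (2 * i) with ha
  set M := l.set (2 * i + 1) (c - k) with hM
  have hMlen : M.length = l.length := List.length_set ..
  have hMpart_ne : ∀ n, n ≠ 2 * i + 1 → part M n = part l n := fun n hn =>
    part_set_ne' _ _ _ _ hn
  have hMpart : part M (2 * i + 1) = c - k := part_set_eq' _ _ _ hi
  have hMchain' := (chain'_part_iff M).mp hchain
  rcases eq_or_lt_of_le hkle with hkc | hkc
  · -- Case B : k = c, so row 2i+1 becomes 0 and l.length = 2i+2
    have hlen : l.length = 2 * i + 2 := by
      by_contra hcon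
      have h3 : 2 * i + 2 < l.length := by omega
      have h4 : part M (2 * i + 2) ≤ part M (2 * i + 1) := hMchain' (2 * i + 1) (by omega)
      rw [hMpart, hMpart_ne (2 * i + 2) (by omega)] at h4
      have h5 : 0 < part l (2 * i + 2) := by
        rw [part_eq_getElem' _ (by omega)]; exact hpos _ (List.getElem_mem (by omega))
      omega
    have hMeq : M = l.take (2 * i + 1) ++ [0] := by
      have h0 : c - k = 0 := by omega
      rw [hM, List.set_eq_take_append_cons_drop, if_pos hi,
        List.drop_eq_nil_of_le (by omega), h0]
    have hMfilter : M.filter (fun x => x ≠ 0) = l.take (2 * i + 1) := by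
      rw [hMeq, List.filter_append]
      have h1 : (l.take (2 * i + 1)).filter (fun x => x ≠ 0) = l.take (2 * i + 1) := by
        rw [List.filter_eq_self]
        intro x hx
        exact decide_eq_true (hpos x (List.take_subset _ _ hx)).ne'
      rw [h1]; simp
    rw [hMfilter]
    have hTlen : (l.take (2 * i + 1)).length = 2 * i + 1 := by
      rw [List.length_take]; omega
    have hTpart : ∀ n, part (l.take (2 * i + 1)) n = if n < 2 * i + 1 then part l n else 0 :=
      fun n => part_take' l _ n
    have hTchain : (l.take (2 * i + 1)).Chain' (· ≥ ·) := by
      rw [chain'_part_iff]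
      intro t ht
      rw [hTlen] at ht
      rw [hTpart, hTpart, if_pos (by omega), if_pos (by omega)]
      exact hchl' t (by omega)
    have hchainT : ((l.take (2 * i + 1)).set (2 * i) (a - k)).Chain' (· ≥ ·) := by
      apply chain'_set_of _ hTchain (2 * i) (a - k) (by omega)
      · rw [hTpart, if_pos (by omega)]; omega
      · rw [hTpart, if_neg (by omega)]; omega
    have hFpart : ∀ n,
        part (((l.take (2 * i + 1)).set (2 * i) (a - k)).filter (fun x => x ≠ 0)) n
          = if n < 2 * i then part l n else if n = 2 * i then a - k else 0 := by
      rcases eq_or_lt_of_le (show k ≤ a by omega) with hka | hka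
      · -- k = a : the new part is 0 too and gets filtered away
        have hset : (l.take (2 * i + 1)).set (2 * i) (a - k) = (l.take (2 * i)) ++ [0] := by
          have h0 : a - k = 0 := by omega
          rw [List.set_eq_take_append_cons_drop, if_pos (by omega),
            List.drop_eq_nil_of_le (by omega), h0, List.take_take]
          congr 2
          omega
        have hfil : ((l.take (2 * i + 1)).set (2 * i) (a - k)).filter (fun x => x ≠ 0)
            = l.take (2 * i) := by
          rw [hset, List.filter_append]
          have h1 : (l.take (2 * i)).filter (fun x => x ≠ 0) = l.take (2 * i) := by
            rw [List.filter_eq_self]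
            intro x hx
            exact decide_eq_true (hpos x (List.take_subset _ _ hx)).ne'
          rw [h1]; simp
        intro n
        rw [hfil, part_take']
        split_ifs <;> omega
      · -- k < a : nothing is filtered
        have hfil : ((l.take (2 * i + 1)).set (2 * i) (a - k)).filter (fun x => x ≠ 0)
            = (l.take (2 * i + 1)).set (2 * i) (a - k) := by
          rw [List.filter_eq_self]
          intro x hx
          rcases List.mem_or_eq_of_mem_set hx with h | h
          · exact decide_eq_true (hpos x (List.take_subset _ _ h)).ne'
          · subst h
            exact decide_eq_true (show a - k ≠ 0 by omega)
        intro n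
        rw [hfil]
        rcases eq_or_ne n (2 * i) with rfl | hn
        · rw [part_set_eq' _ _ _ (by omega), if_neg (by omega), if_pos rfl]
        · rw [part_set_ne' _ _ _ _ hn, hTpart]
          split_ifs <;> omega
    have hrem : rem (((l.take (2 * i + 1)).set (2 * i) (a - k)).filter (fun x => x ≠ 0))
        = rem l := by
      funext j
      simp only [rem]
      rw [hFpart, hFpart]
      rcases lt_trichotomy j i with h | h | h
      · split_ifs <;> omega
      · subst h
        split_ifs <;> omega
      · have hz1 : part l (2 * j) = 0 := part_eq_zero' l (by omega)
        have hz2 : part l (2 * j + 1) = 0 := part_eq_zero' l (by omega)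
        split_ifs <;> omega
    refine ⟨⟨2 * i, a - k, ?_, ?_, hchainT, rfl⟩, hrem, (nimSum_congr _ l hrem).trans hP⟩
    · omega
    · rw [hTpart, if_pos (by omega)]; omega
  · -- Case A : k < c, nothing gets filtered
    have hMfilter : M.filter (fun x => x ≠ 0) = M := by
      rw [List.filter_eq_self]
      intro x hx
      rcases List.mem_or_eq_of_mem_set hx with h | h
      · exact decide_eq_true (hpos x h).ne'
      · subst h
        exact decide_eq_true (show c - k ≠ 0 by omega)
    rw [hMfilter]
    have hLchain : (M.set (2 * i) (a - k)).Chain' (· ≥ ·) := by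
      apply chain'_set_of M hchain (2 * i) (a - k) (by omega)
      · rw [hMpart_ne _ (by omega)]; omega
      · rw [hMpart]; omega
    have hLfilter : (M.set (2 * i) (a - k)).filter (fun x => x ≠ 0)
        = M.set (2 * i) (a - k) := by
      rw [List.filter_eq_self]
      intro x hx
      rcases List.mem_or_eq_of_mem_set hx with h | h
      · rcases List.mem_or_eq_of_mem_set h with h' | h'
        · exact decide_eq_true (hpos x h').ne'
        · subst h'
          exact decide_eq_true (show c - k ≠ 0 by omega)
      · subst h
        exact decide_eq_true (show a - k ≠ 0 by omega)
    have hrem : rem ((M.set (2 * i) (a - k)).filter (fun x => x ≠ 0)) = rem l := by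
      rw [hLfilter]
      funext j
      simp only [rem]
      rcases eq_or_ne j i with rfl | hj
      · rw [part_set_eq' M (a - k) (2 * j) (by omega),
          part_set_ne' M (a - k) (2 * j) (2 * j + 1) (by omega), hMpart]
        omega
      · rw [part_set_ne' M (a - k) (2 * i) (2 * j) (by omega),
          part_set_ne' M (a - k) (2 * i) (2 * j + 1) (by omega),
          hMpart_ne (2 * j) (by omega), hMpart_ne (2 * j + 1) (by omega)]
    refine ⟨⟨2 * i, a - k, ?_, ?_, hLchain, rfl⟩, hrem, (nimSum_congr _ l hrem).trans hP⟩
    · omega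
    · rw [hMpart_ne _ (by omega)]; omega
end
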